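/- Let μ = (d_1^{p_1},…,d_s^{p_s},0^{p_{s+1}}) ∈ P_n with d_1 > ⋯ > d_s > 0 and let λ ∈ P_n. Then: (a) λ ≤ μ and λ ≠ μ if and only if λ ≤ μ∖e_i for some i ∈ [s]; (b) for every nonempty F ⊆ [s], λ ≤ μ∖e_i for all i ∈ F if and only if λ ≤ μ∖e_F. Consequently, if I = ⟨λ^1,…,λ^r⟩_{S_n} and G_i = {j ∈ [r] : λ^j ≤ μ∖e_i} for i ∈ [s], then a nonempty F ⊆ [s] satisfies ∩_{i∈F} G_i ≠ ∅ if and only if μ∖e_F ∈ P(I), i.e. F ∈ Δ^{μ,0}(I); thus the nonempty faces of the nerve of G_1,…,G_s coincide with the nonempty faces of Δ^{μ,0}(I). -/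
import Mathlib


open scoped BigOperators

noncomputable section
open Classical

/-! ## Generic (labeled) simplicial chain complexes and reduced homology over a field -/

section Homology

variable (K : Type) [Field K] {α : Type}

/-- Index type for chains: elements of `S` whose face (second component) has `j` elements. -/
def ChainIdx (S : Set (α × Finset ℕ)) (j : ℕ) : Type :=
  {q : α × Finset ℕ // q ∈ S ∧ q.2.card = j}

/-- The boundary of a basis element, with the usual simplicial signs. -/
noncomputable def bdElt (S : Set (α × Finset ℕ)) (j : ℕ) (q : ChainIdx S (j + 1)) :
    ChainIdx S j →₀ K :=
  ∑ v ∈ q.1.2,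
    if h : (q.1.1, q.1.2.erase v) ∈ S ∧ (q.1.2.erase v).card = j then
      ((-1 : K) ^ (q.1.2.filter (fun u => u ≤ v)).card) •
        Finsupp.single (⟨(q.1.1, q.1.2.erase v), h⟩ : ChainIdx S j) (1 : K)
    else 0

/-- The simplicial boundary map. -/
noncomputable def bd (S : Set (α × Finset ℕ)) (j : ℕ) :
    (ChainIdx S (j + 1) →₀ K) →ₗ[K] (ChainIdx S j →₀ K) :=
  Finsupp.linearCombination K (bdElt K S j)

/-- Cycles in homological degree `j` (chains are indexed by the cardinality of faces;
degree `j` corresponds to reduced topological degree `j - 1`). -/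
noncomputable def cycles (S : Set (α × Finset ℕ)) : (j : ℕ) → Submodule K (ChainIdx S j →₀ K)
  | 0 => ⊤
  | (i + 1) => LinearMap.ker (bd K S i)

/-- `rhd K S j` is the dimension of the reduced homology group `H̃_{j-1}` of the complex `S`
(the chain groups being finite dimensional, this is `dim` cycles `- dim` boundaries). -/
noncomputable def rhd (S : Set (α × Finset ℕ)) (j : ℕ) : ℕ :=
  Module.finrank K (cycles K S j) -
    Module.finrank K (LinearMap.range (bd K S j) ⊓ cycles K S j : Submodule K _)

/-- `hdim K S j = dim_K H̃_j(S; K)`, for `j : ℤ` (zero for `j ≤ -2`). -/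
noncomputable def hdim (S : Set (α × Finset ℕ)) (j : ℤ) : ℕ :=
  if 0 ≤ j + 1 then rhd K S (j + 1).toNat else 0

/-- View an unlabeled collection of faces as a labeled one (labels in `Unit`). -/
def lab (Δ : Set (Finset ℕ)) : Set (Unit × Finset ℕ) := {q | q.2 ∈ Δ}

/-- Dimension of reduced homology `H̃_{j-1}(Δ; K)` of a collection `Δ` of finite sets. -/
noncomputable def rhd0 (Δ : Set (Finset ℕ)) (j : ℕ) : ℕ := rhd K (lab Δ) j

/-- Dimension of reduced homology `H̃_j(Δ; K)`, `j : ℤ`. -/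
noncomputable def hdim0 (Δ : Set (Finset ℕ)) (j : ℤ) : ℕ := hdim K (lab Δ) j

end Homology

/-! ## Monomial ideals in `k[x_1, …, x_n]`, invariant under the symmetric group -/

section Poly

variable (K : Type) [Field K] (n : ℕ)

/-- The monomial `x^a` in `k[x_1, …, x_n]`. -/
noncomputable def mon (a : Fin n → ℕ) : MvPolynomial (Fin n) K :=
  MvPolynomial.monomial (Finsupp.equivFunOnFinite.symm a) 1

/-- A monomial ideal: an ideal generated by a set of monomials. -/
def IsMonomialIdeal (I : Ideal (MvPolynomial (Fin n) K)) : Prop :=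
  ∃ S : Set (Fin n → ℕ), I = Ideal.span (mon K n '' S)

/-- `I` is invariant under the action of `S_n` permuting the variables. -/
def IsSymmetricIdeal (I : Ideal (MvPolynomial (Fin n) K)) : Prop :=
  ∀ σ : Equiv.Perm (Fin n), Ideal.map (MvPolynomial.rename σ).toRingHom I = I

end Poly

/-! ## Partitions given by blocks `(d_1^{p_1}, …, d_s^{p_s}, 0^{p_{s+1}})` -/

section Blocks

/-- `cumsum p k = p 0 + ⋯ + p (k-1)`. -/
def cumsum (p : ℕ → ℕ) (k : ℕ) : ℕ := ∑ j ∈ Finset.range k, p j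

/-- The index of the block (among blocks `0, …, s`) containing position `i`,
for blocks of sizes `p 0, …, p (s-1)` followed by a final block. -/
def blkOf (p : ℕ → ℕ) (s i : ℕ) : ℕ :=
  ((Finset.range s).filter fun k => cumsum p (k + 1) ≤ i).card

/-- The partition `μ = (d_0^{p_0}, …, d_{s-1}^{p_{s-1}}, 0^{p_s})` (0-indexed blocks),
as a function of the position `i ∈ {0, …, n-1}` where `n = cumsum p (s+1)`. -/
def muOf (s : ℕ) (d p : ℕ → ℕ) (i : ℕ) : ℕ :=
  if blkOf p s i < s then d (blkOf p s i) else 0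

/-- The partition `μ ∖ c`, obtained from `μ` by replacing, for each `k`, the last `c k` of
the parts equal to `d k` by `d k - 1`. -/
def muMinus (s : ℕ) (d p c : ℕ → ℕ) (i : ℕ) : ℕ :=
  if blkOf p s i < s then
    (if p (blkOf p s i) - c (blkOf p s i) ≤ i - cumsum p (blkOf p s i) then
      d (blkOf p s i) - 1 else d (blkOf p s i))
  else 0

/-- Indicator vector of a finite set `F`. -/
def eF (F : Finset ℕ) (j : ℕ) : ℕ := if j ∈ F then 1 else 0

end Blocks

/-! ## The simplicial complexes `Δ^{μ,c}(I)` and `Γ^{μ,c}(I)` -/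

section Complexes

variable (K : Type) [Field K] (n : ℕ)

/-- The simplicial complex `Δ^{μ,c}(I) = {F ⊆ [s] : μ ∖ (c + e_F) ∈ P(I)}` (vertices are
`0, …, s-1`), for `μ = (d_0^{p_0}, …, d_{s-1}^{p_{s-1}}, 0^{p_s})` and `c ≤ p(μ)`. -/
def DeltaCx (I : Ideal (MvPolynomial (Fin n) K)) (s : ℕ) (d p c : ℕ → ℕ) :
    Set (Finset ℕ) :=
  {F | F ⊆ Finset.range s ∧
    mon K n (fun i => muMinus s d p (fun j => c j + eF F j) i.val) ∈ I}

/-- The Alexander dual complex `Γ^{μ,c}(I) = {F ⊆ [s] : μ ∖ (c + e_{[s]∖F}) ∈ O(I)}`. -/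
def GammaCx (I : Ideal (MvPolynomial (Fin n) K)) (s : ℕ) (d p c : ℕ → ℕ) :
    Set (Finset ℕ) :=
  {F | F ⊆ Finset.range s ∧
    mon K n (fun i => muMinus s d p
      (fun j => c j + (if j < s ∧ j ∉ F then 1 else 0)) i.val) ∉ I}

/-- `γ_i^{μ,c}(I) = dim_K H̃_{i-1}(Δ^{μ,c}(I); K)`. -/
noncomputable def gammaDim (I : Ideal (MvPolynomial (Fin n) K)) (s : ℕ) (d p c : ℕ → ℕ)
    (i : ℕ) : ℕ :=
  rhd0 K (DeltaCx K n I s d p c) i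

end Complexes

/-! ## Multigraded Tor via the Koszul complex

For a monomial ideal `I`, the multidegree-`a` strand of the Koszul complex `K_•(I)` is the
(shifted) reduced chain complex of the simplicial complex
`Δ_a^I = {F ⊆ [n] : a - e_F ≥ 0, x^{a - e_F} ∈ I}`, so that
`dim_K Tor_i(I, K)_a = dim_K H̃_{i-1}(Δ_a^I; K)`, and similarly for `R/I` with the
condition `x^{a-e_F} ∉ I`. -/

section Tor

variable (K : Type) [Field K] (n : ℕ)

/-- The Koszul simplicial complex of the ideal `I` in multidegree `a`. -/
def KosI (I : Ideal (MvPolynomial (Fin n) K)) (a : Fin n → ℕ) : Set (Finset ℕ) :=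
  {F | F ⊆ Finset.range n ∧ (∀ i : Fin n, (i : ℕ) ∈ F → 1 ≤ a i) ∧
    mon K n (fun i => a i - eF F i.val) ∈ I}

/-- The Koszul complex of `R/I` in multidegree `a`. -/
def KosQ (I : Ideal (MvPolynomial (Fin n) K)) (a : Fin n → ℕ) : Set (Finset ℕ) :=
  {F | F ⊆ Finset.range n ∧ (∀ i : Fin n, (i : ℕ) ∈ F → 1 ≤ a i) ∧
    mon K n (fun i => a i - eF F i.val) ∉ I}

/-- `dim_K Tor_i(I, K)_a`, for a monomial ideal `I` and a multidegree `a ∈ ℤ^n`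
(components with a negative coordinate vanish, so only `a ∈ ℕ^n` is needed). -/
noncomputable def torDim (I : Ideal (MvPolynomial (Fin n) K)) (i : ℕ) (a : Fin n → ℕ) : ℕ :=
  rhd0 K (KosI K n I a) i

/-- `dim_K Tor_i(R/I, K)_a` for a monomial ideal `I`. -/
noncomputable def torQDim (I : Ideal (MvPolynomial (Fin n) K)) (i : ℕ) (a : Fin n → ℕ) : ℕ :=
  rhd0 K (KosQ K n I a) i

/-- `dim_K Tor_i(I, K)_{⟨μ⟩}`: the sum of `dim_K Tor_i(I, K)_a` over all rearrangements `a`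
of the partition `μ`. -/
noncomputable def torDimSym (I : Ideal (MvPolynomial (Fin n) K)) (i : ℕ) (μ : Fin n → ℕ) : ℕ :=
  ∑ a ∈ Finset.image (fun σ : Equiv.Perm (Fin n) => μ ∘ σ) Finset.univ, torDim K n I i a

/-- `dim_K Tor_i(R/I, K)_{⟨μ⟩}`. -/
noncomputable def torQDimSym (I : Ideal (MvPolynomial (Fin n) K)) (i : ℕ) (μ : Fin n → ℕ) : ℕ :=
  ∑ a ∈ Finset.image (fun σ : Equiv.Perm (Fin n) => μ ∘ σ) Finset.univ, torQDim K n I i a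

end Tor

/-! ## Extended partitions in `P_n^∞` and the dual generators of an `S_n`-invariant
monomial ideal -/

section ExtendedPartitions

variable (K : Type) [Field K] (n : ℕ)

/-- `ℓ(μ)`: the number of entries of `μ ∈ P_n^∞` equal to `∞`. -/
def ellInf (μ : Fin n → ℕ∞) : ℕ := (Finset.univ.filter fun i => μ i = ⊤).card

/-- The largest finite entry of `μ ∈ P_n^∞` (i.e. the first finite entry, `μ` being
weakly decreasing). -/
def topVal (μ : Fin n → ℕ∞) : ℕ := Finset.univ.sup fun i => (μ i).toNat

/-- `μ^+ ∈ P_n`: each `∞` entry of `μ` is replaced by (largest finite entry)` + 1`. -/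
def plusOf (μ : Fin n → ℕ∞) (i : Fin n) : ℕ :=
  if μ i = ⊤ then topVal n μ + 1 else (μ i).toNat

/-- `μ̃ = μ^+ + (0^{ℓ(μ)}, 1^{n - ℓ(μ)}) ∈ P_n`. -/
def tildeOf (μ : Fin n → ℕ∞) (i : Fin n) : ℕ :=
  if μ i = ⊤ then topVal n μ + 1 else (μ i).toNat + 1

/-- The ideal `Q_μ = ∩_{σ ∈ S_n} σ((x_k^{μ_k + 1}, …, x_n^{μ_n + 1}))`, where
`μ_k, …, μ_n` are the finite entries of `μ ∈ P_n^∞`. -/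
noncomputable def Qgen (μ : Fin n → ℕ∞) : Ideal (MvPolynomial (Fin n) K) :=
  ⨅ σ : Equiv.Perm (Fin n),
    Ideal.map (MvPolynomial.rename σ).toRingHom
      (Ideal.span {g | ∃ i : Fin n, μ i ≠ ⊤ ∧ g = MvPolynomial.X i ^ ((μ i).toNat + 1)})

/-- `Λ` is the (finite) set of dual generators of `I`, i.e. `I = ∩_{μ ∈ Λ} Q_μ` is the
irredundant presentation of `I` by ideals `Q_μ`. -/
def IsDualPresentation (I : Ideal (MvPolynomial (Fin n) K))
    (Λ : Finset (Fin n → ℕ∞)) : Prop :=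
  (∀ μ ∈ Λ, Antitone μ) ∧ (I = ⨅ μ ∈ Λ, Qgen K n μ) ∧
    ∀ μ ∈ Λ, I ≠ ⨅ ρ ∈ Λ, ⨅ _ : ρ ≠ μ, Qgen K n ρ

/-- The partial order `≼` on dual generators: `μ ≼ ρ` iff `μ̃ ≤ ρ̃` (componentwise) and
`ℓ(μ) - ℓ(ρ) ≤ |ρ̃| - |μ̃|`. -/
def preceq (μ ρ : Fin n → ℕ∞) : Prop :=
  (∀ i, tildeOf n μ i ≤ tildeOf n ρ i) ∧
    (∑ i, tildeOf n μ i) + ellInf n μ ≤ (∑ i, tildeOf n ρ i) + ellInf n ρ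

/-- The extended partition `ρ = (∞^{p_0}, d_1^{p_1}, …, d_s^{p_s}) ∈ P_n^∞`
(so `n = p 0 + p 1 + ⋯ + p s`), as a function of the position `i ∈ {0, …, n-1}`. -/
def rhoOf (s : ℕ) (d p : ℕ → ℕ) (i : ℕ) : ℕ∞ :=
  if blkOf p (s + 1) i = 0 then ⊤ else ((d (blkOf p (s + 1) i) : ℕ) : ℕ∞)

end ExtendedPartitions

/-- The `S_n`-invariant monomial ideal `⟨λ^1, …, λ^r⟩_{S_n}` generated by the
partitions `L 0, …, L (r-1)`. -/
def symIdeal (K : Type) [Field K] (n r : ℕ) (L : Fin r → Fin n → ℕ) :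
    Ideal (MvPolynomial (Fin n) K) :=
  Ideal.span {f | ∃ (j : Fin r) (σ : Equiv.Perm (Fin n)),
    f = MvPolynomial.rename σ (mon K n (L j))}

namespace Aux

lemma cumsum_succ (p : ℕ → ℕ) (k : ℕ) : cumsum p (k+1) = cumsum p k + p k :=
  Finset.sum_range_succ p k

lemma cumsum_mono (p : ℕ → ℕ) : Monotone (cumsum p) := fun a b h =>
  Finset.sum_le_sum_of_subset (Finset.range_subset_range.2 h)

lemma lowerset_eq_range (S : Finset ℕ) (h : ∀ j ∈ S, ∀ j' ≤ j, j' ∈ S) :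
    S = Finset.range S.card := by
  have hsub : S ⊆ Finset.range S.card := by
    intro j hj
    have : Finset.range (j+1) ⊆ S := by
      intro m hm
      exact h j hj m (Nat.lt_succ_iff.mp (Finset.mem_range.mp hm))
    have := Finset.card_le_card this
    simp only [Finset.card_range] at this
    exact Finset.mem_range.mpr this
  exact Finset.eq_of_subset_of_card_le hsub (by simp)

lemma blk_filter_eq (p : ℕ → ℕ) (s i : ℕ) :
    ((Finset.range s).filter fun k => cumsum p (k + 1) ≤ i) = Finset.range (blkOf p s i) := by
  apply lowerset_eq_range
  intro j hj j' hj'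
  simp only [Finset.mem_filter, Finset.mem_range] at hj ⊢
  exact ⟨lt_of_le_of_lt hj' hj.1, le_trans (cumsum_mono p (by omega)) hj.2⟩

lemma blkOf_le (p : ℕ → ℕ) (s i : ℕ) : blkOf p s i ≤ s :=
  le_trans (Finset.card_filter_le _ _) (by simp)

lemma cumsum_blkOf_le (p : ℕ → ℕ) (s i : ℕ) : cumsum p (blkOf p s i) ≤ i := by
  rcases Nat.eq_zero_or_pos (blkOf p s i) with h | h
  · simp [h, cumsum]
  · have : blkOf p s i - 1 ∈ Finset.range (blkOf p s i) := by
      simp; omega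
    rw [← blk_filter_eq] at this
    simp only [Finset.mem_filter] at this
    have := this.2
    have he : blkOf p s i - 1 + 1 = blkOf p s i := by omega
    rwa [he] at this
lemma lt_cumsum_succ_blkOf (p : ℕ → ℕ) (s i : ℕ) (h : blkOf p s i < s) :
    i < cumsum p (blkOf p s i + 1) := by
  by_contra hc
  push_neg at hc
  have : blkOf p s i ∈ Finset.range (blkOf p s i) := by
    rw [← blk_filter_eq]
    simp [h, hc]
  simp at this

lemma blkOf_eq (p : ℕ → ℕ) (s i k : ℕ) (hk : k ≤ s)
    (h1 : cumsum p k ≤ i) (h2 : k < s → i < cumsum p (k+1)) : blkOf p s i = k := by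
  have : ((Finset.range s).filter fun j => cumsum p (j + 1) ≤ i) = Finset.range k := by
    ext j
    simp only [Finset.mem_filter, Finset.mem_range]
    constructor
    · rintro ⟨hjs, hji⟩
      by_contra hc
      push_neg at hc
      exact absurd (le_trans (cumsum_mono p (by omega)) hji) (not_le.mpr (h2 (lt_of_le_of_lt hc hjs)))
    · intro hjk
      exact ⟨lt_of_lt_of_le hjk hk, le_trans (cumsum_mono p (by omega)) h1⟩
  unfold blkOf
  rw [this, Finset.card_range]

lemma blkOf_mono (p : ℕ → ℕ) (s : ℕ) {i i' : ℕ} (h : i ≤ i') : blkOf p s i ≤ blkOf p s i' := by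
  apply Finset.card_le_card
  intro k hk
  simp only [Finset.mem_filter] at hk ⊢
  exact ⟨hk.1, le_trans hk.2 h⟩


lemma muMinus_in_block (s : ℕ) (d p c : ℕ → ℕ) (i k : ℕ) (hk : k < s)
    (h1 : cumsum p k ≤ i) (h2 : i < cumsum p (k+1)) :
    muMinus s d p c i = if p k - c k ≤ i - cumsum p k then d k - 1 else d k := by
  unfold muMinus
  rw [blkOf_eq p s i k hk.le h1 (fun _ => h2)]
  simp [hk]

lemma muOf_in_block (s : ℕ) (d p : ℕ → ℕ) (i k : ℕ) (hk : k < s)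
    (h1 : cumsum p k ≤ i) (h2 : i < cumsum p (k+1)) :
    muOf s d p i = d k := by
  unfold muOf
  rw [blkOf_eq p s i k hk.le h1 (fun _ => h2)]
  simp [hk]

lemma blkOf_lt_of_lt (p : ℕ → ℕ) (s i : ℕ) (h : i < cumsum p s) : blkOf p s i < s := by
  rcases lt_or_eq_of_le (blkOf_le p s i) with h' | h'
  · exact h'
  · exact absurd (h' ▸ cumsum_blkOf_le p s i) (not_le.mpr h)

lemma muMinus_out (s : ℕ) (d p c : ℕ → ℕ) (i : ℕ) (h : cumsum p s ≤ i) :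
    muMinus s d p c i = 0 := by
  unfold muMinus
  split
  · next hb =>
      exact absurd (lt_of_lt_of_le (lt_cumsum_succ_blkOf p s i hb)
        (cumsum_mono p hb)) (not_lt.mpr h)
  · rfl

lemma muOf_out (s : ℕ) (d p : ℕ → ℕ) (i : ℕ) (h : cumsum p s ≤ i) :
    muOf s d p i = 0 := by
  unfold muOf
  split
  · next hb =>
      exact absurd (lt_of_lt_of_le (lt_cumsum_succ_blkOf p s i hb)
        (cumsum_mono p hb)) (not_lt.mpr h)
  · rfl

lemma muMinus_le_muOf (s : ℕ) (d p c : ℕ → ℕ) (i : ℕ) :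
    muMinus s d p c i ≤ muOf s d p i := by
  unfold muMinus muOf
  split_ifs <;> omega

lemma muMinus_le_muMinus (s : ℕ) (d p c c' : ℕ → ℕ) (i : ℕ)
    (h : c (blkOf p s i) ≤ c' (blkOf p s i)) :
    muMinus s d p c' i ≤ muMinus s d p c i := by
  unfold muMinus
  split_ifs <;> omega

lemma d_strict (s : ℕ) (d : ℕ → ℕ) (hd : ∀ k, k + 1 < s → d (k + 1) < d k) :
    ∀ b, b < s → ∀ a, a < b → d b < d a := by
  intro b
  induction b with
  | zero => intro _ a ha; omega
  | succ k ih =>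
      intro hb a ha
      have h1 : d (k+1) < d k := hd k hb
      rcases Nat.lt_succ_iff_lt_or_eq.mp ha with h | h
      · exact lt_trans h1 (ih (by omega) a h)
      · subst h; exact h1

lemma muMinus_antitone (s : ℕ) (d p c : ℕ → ℕ)
    (hd : ∀ k, k + 1 < s → d (k + 1) < d k) (hdpos : ∀ k, k < s → 0 < d k)
    {i i' : ℕ} (h : i ≤ i') : muMinus s d p c i' ≤ muMinus s d p c i := by
  have hb : blkOf p s i ≤ blkOf p s i' := blkOf_mono p s h
  unfold muMinus
  by_cases h' : blkOf p s i' < s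
  · have h0 : blkOf p s i < s := lt_of_le_of_lt hb h'
    rcases lt_or_eq_of_le hb with hlt | heq
    · have : d (blkOf p s i') < d (blkOf p s i) := d_strict s d hd _ h' _ hlt
      split_ifs <;> omega
    · rw [← heq]
      have : i - cumsum p (blkOf p s i) ≤ i' - cumsum p (blkOf p s i) := by
        have := cumsum_blkOf_le p s i
        omega
      simp only [h0, if_true]
      split_ifs <;> omega
  · simp [h']

/-- Pigeonhole dominance lemma. -/
lemma perm_dom {n : ℕ} (a b : Fin n → ℕ) (ha : Antitone a) (hb : Antitone b)
    (σ : Equiv.Perm (Fin n)) (h : ∀ i, b (σ i) ≤ a i) : ∀ i, b i ≤ a i := by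
  intro t
  obtain ⟨u, hu1, hu2⟩ : ∃ u, t ≤ u ∧ σ u ≤ t := by
    by_contra hc
    push_neg at hc
    have hsub : (Finset.Ici t).image σ ⊆ Finset.Ioi t := by
      intro v hv
      simp only [Finset.mem_image, Finset.mem_Ici, Finset.mem_Ioi] at hv ⊢
      obtain ⟨u, hu, rfl⟩ := hv
      exact hc u hu
    have hcard := Finset.card_le_card hsub
    rw [Finset.card_image_of_injective _ σ.injective, Fin.card_Ici, Fin.card_Ioi] at hcard
    have := t.isLt
    omega
  calc b t ≤ b (σ u) := hb hu2
    _ ≤ a u := h u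
    _ ≤ a t := ha hu1

end Aux

section MainAux
namespace Aux

lemma mem_symIdeal_iff (K : Type) [Field K] (n r : ℕ) (L : Fin r → Fin n → ℕ) (a : Fin n → ℕ) :
    mon K n a ∈ symIdeal K n r L ↔
      ∃ j : Fin r, ∃ σ : Equiv.Perm (Fin n), ∀ i, L j (σ i) ≤ a i := by
  have hset : {f | ∃ (j : Fin r) (σ : Equiv.Perm (Fin n)),
        f = MvPolynomial.rename σ (mon K n (L j))}
      = (fun m => MvPolynomial.monomial m (1:K)) ''
        {m | ∃ (j : Fin r) (σ : Equiv.Perm (Fin n)),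
          m = Finsupp.mapDomain σ (Finsupp.equivFunOnFinite.symm (L j))} := by
    ext f
    simp only [Set.mem_setOf_eq, Set.mem_image]
    constructor
    · rintro ⟨j, σ, rfl⟩
      exact ⟨_, ⟨j, σ, rfl⟩, by rw [mon, MvPolynomial.rename_monomial]⟩
    · rintro ⟨m, ⟨j, σ, rfl⟩, rfl⟩
      exact ⟨j, σ, by rw [mon, MvPolynomial.rename_monomial]⟩
  rw [symIdeal, hset, MvPolynomial.mem_ideal_span_monomial_image]
  have hsupp : (mon K n a).support = {Finsupp.equivFunOnFinite.symm a} := by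
    rw [mon, MvPolynomial.support_monomial]
    simp
  rw [hsupp]
  simp only [Finset.mem_singleton, forall_eq, Set.mem_setOf_eq]
  constructor
  · rintro ⟨si, ⟨j, σ, rfl⟩, hle⟩
    refine ⟨j, σ.symm, fun i => ?_⟩
    have h2 := (Finsupp.le_def).mp hle i
    rw [Finsupp.mapDomain_equiv_apply] at h2
    simpa using h2
  · rintro ⟨j, σ, h⟩
    refine ⟨_, ⟨j, σ.symm, rfl⟩, ?_⟩
    rw [Finsupp.le_def]
    intro i
    rw [Finsupp.mapDomain_equiv_apply]
    simpa using h i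

end Aux
end MainAux

/-- Let `μ = (d_1^{p_1}, …, d_s^{p_s}, 0^{p_{s+1}}) ∈ P_n` with
`d_1 > ⋯ > d_s > 0` and `λ ∈ P_n`.  Then: (a) `λ ≤ μ` and `λ ≠ μ` iff `λ ≤ μ∖e_k` for
some `k ∈ [s]`; (b) for nonempty `F ⊆ [s]`, `λ ≤ μ∖e_k` for all `k ∈ F` iff `λ ≤ μ∖e_F`;
consequently, for `I = ⟨λ^1, …, λ^r⟩_{S_n}` and `G_k = {j : λ^j ≤ μ∖e_k}`, a nonempty
`F ⊆ [s]` satisfies `∩_{k ∈ F} G_k ≠ ∅` iff `F ∈ Δ^{μ,0}(I)` (so the nonempty faces of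
the nerve of `G_1, …, G_s` are those of `Δ^{μ,0}(I)`).
(Vertices are indexed `0, …, s-1`.) -/
theorem statement_4 (K : Type) [Field K] (n : ℕ)
    (s : ℕ) (d p : ℕ → ℕ)
    (hn : n = cumsum p (s + 1))
    (hd : ∀ k, k + 1 < s → d (k + 1) < d k)
    (hdpos : ∀ k, k < s → 0 < d k)
    (hppos : ∀ k, k < s → 0 < p k)
    (lam : Fin n → ℕ) (hlam : Antitone lam)
    (r : ℕ) (L : Fin r → Fin n → ℕ) (hL : ∀ j, Antitone (L j)) :
    (((∀ t, lam t ≤ muOf s d p t.val) ∧ lam ≠ fun t => muOf s d p t.val) ↔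
        ∃ k < s, ∀ t : Fin n, lam t ≤ muMinus s d p (fun u => if u = k then 1 else 0) t.val) ∧
    (∀ F : Finset ℕ, F ⊆ Finset.range s → F.Nonempty →
      ((∀ k ∈ F, ∀ t : Fin n, lam t ≤ muMinus s d p (fun u => if u = k then 1 else 0) t.val) ↔
        ∀ t : Fin n, lam t ≤ muMinus s d p (eF F) t.val)) ∧
    (∀ F : Finset ℕ, F ⊆ Finset.range s → F.Nonempty →
      ((∃ j : Fin r, ∀ k ∈ F, ∀ t : Fin n,
          L j t ≤ muMinus s d p (fun u => if u = k then 1 else 0) t.val) ↔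
        F ∈ DeltaCx K n (symIdeal K n r L) s d p (fun _ => 0))) := by
  have hn' : cumsum p s ≤ n := by
    rw [hn]; exact Aux.cumsum_mono p (Nat.le_succ s)
  -- Part (b), stated for an arbitrary antitone function
  have partb : ∀ (lam : Fin n → ℕ), Antitone lam → ∀ F : Finset ℕ, F ⊆ Finset.range s →
      F.Nonempty →
      ((∀ k ∈ F, ∀ t : Fin n, lam t ≤ muMinus s d p (fun u => if u = k then 1 else 0) t.val) ↔
        ∀ t : Fin n, lam t ≤ muMinus s d p (eF F) t.val) := by
    intro lam hlam F hF hFne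
    constructor
    · intro h t
      obtain ⟨k0, hk0⟩ := hFne
      by_cases hcase : (t : ℕ) < cumsum p s
      · have hb : blkOf p s t.val < s := Aux.blkOf_lt_of_lt p s t.val hcase
        have h1 : cumsum p (blkOf p s t.val) ≤ t.val := Aux.cumsum_blkOf_le p s t.val
        have h2 : t.val < cumsum p (blkOf p s t.val + 1) :=
          Aux.lt_cumsum_succ_blkOf p s t.val hb
        by_cases hbF : blkOf p s t.val ∈ F
        · have hh := h _ hbF t
          rw [Aux.muMinus_in_block s d p _ t.val _ hb h1 h2] at hh
          rw [Aux.muMinus_in_block s d p (eF F) t.val _ hb h1 h2]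
          simpa [eF, hbF] using hh
        · rw [Aux.muMinus_in_block s d p (eF F) t.val _ hb h1 h2]
          have hcond : ¬ (p (blkOf p s t.val) - eF F (blkOf p s t.val) ≤
              t.val - cumsum p (blkOf p s t.val)) := by
            rw [Aux.cumsum_succ] at h2
            simp only [eF, hbF, if_false]
            omega
          rw [if_neg hcond]
          calc lam t ≤ muMinus s d p (fun u => if u = k0 then 1 else 0) t.val := h k0 hk0 t
            _ ≤ muOf s d p t.val := Aux.muMinus_le_muOf s d p _ t.val
            _ = d (blkOf p s t.val) := Aux.muOf_in_block s d p t.val _ hb h1 h2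
      · push_neg at hcase
        rw [Aux.muMinus_out s d p _ t.val hcase]
        have hh := h k0 hk0 t
        rwa [Aux.muMinus_out s d p _ t.val hcase] at hh
    · intro h k hk t
      refine le_trans (h t) (Aux.muMinus_le_muMinus s d p _ (eF F) t.val ?_)
      by_cases hb : blkOf p s t.val = k <;> simp [eF, hb, hk]
  -- Part (a)
  have parta : ((∀ t, lam t ≤ muOf s d p t.val) ∧ lam ≠ fun t => muOf s d p t.val) ↔
      ∃ k < s, ∀ t : Fin n, lam t ≤ muMinus s d p (fun u => if u = k then 1 else 0) t.val := by
    constructor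
    · rintro ⟨hle, hne⟩
      obtain ⟨t, ht⟩ : ∃ t, lam t ≠ muOf s d p t.val := by
        by_contra hc; push_neg at hc; exact hne (funext hc)
      have htlt : lam t < muOf s d p t.val := lt_of_le_of_ne (hle t) ht
      have hcs : t.val < cumsum p s := by
        by_contra hc; push_neg at hc
        rw [Aux.muOf_out s d p t.val hc] at htlt; omega
      have hb : blkOf p s t.val < s := Aux.blkOf_lt_of_lt p s t.val hcs
      have h1 : cumsum p (blkOf p s t.val) ≤ t.val := Aux.cumsum_blkOf_le p s t.val
      have h2 : t.val < cumsum p (blkOf p s t.val + 1) := Aux.lt_cumsum_succ_blkOf p s t.val hb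
      rw [Aux.muOf_in_block s d p t.val _ hb h1 h2] at htlt
      refine ⟨blkOf p s t.val, hb, fun t' => ?_⟩
      by_cases hcase : (t' : ℕ) < cumsum p s
      · have hb' : blkOf p s t'.val < s := Aux.blkOf_lt_of_lt p s t'.val hcase
        have h1' : cumsum p (blkOf p s t'.val) ≤ t'.val := Aux.cumsum_blkOf_le p s t'.val
        have h2' : t'.val < cumsum p (blkOf p s t'.val + 1) :=
          Aux.lt_cumsum_succ_blkOf p s t'.val hb'
        rw [Aux.muMinus_in_block s d p _ t'.val _ hb' h1' h2']
        have hmu' : muOf s d p t'.val = d (blkOf p s t'.val) :=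
          Aux.muOf_in_block s d p t'.val _ hb' h1' h2'
        by_cases hbb : blkOf p s t'.val = blkOf p s t.val
        · rw [hbb, if_pos rfl]
          split_ifs with hcond
          · have hts : t.val ≤ t'.val := by
              rw [Aux.cumsum_succ] at h2
              rw [hbb] at h1'
              have := hppos _ hb
              omega
            have hmm := hlam (show t ≤ t' from hts)
            omega
          · rw [hbb] at hmu'
            exact le_trans (hle t') (le_of_eq hmu')
        · have hcond : ¬ (p (blkOf p s t'.val) -
              (if blkOf p s t'.val = blkOf p s t.val then 1 else 0) ≤
              t'.val - cumsum p (blkOf p s t'.val)) := by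
            rw [Aux.cumsum_succ] at h2'
            simp only [hbb, if_false]
            omega
          rw [if_neg hcond]
          exact le_trans (hle t') (le_of_eq hmu')
      · push_neg at hcase
        rw [Aux.muMinus_out s d p _ t'.val hcase]
        have hh := hle t'
        rwa [Aux.muOf_out s d p t'.val hcase] at hh
    · rintro ⟨k, hk, h⟩
      have hpk : 0 < p k := hppos k hk
      have ht0 : cumsum p k + p k - 1 < n := by
        have hle : cumsum p k + p k ≤ cumsum p (s+1) := by
          rw [← Aux.cumsum_succ]
          exact Aux.cumsum_mono p (by omega)
        omega
      set t0 : Fin n := ⟨cumsum p k + p k - 1, ht0⟩ with ht0def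
      have h1 : cumsum p k ≤ t0.val := by simp only [ht0def]; omega
      have h2 : t0.val < cumsum p (k+1) := by
        rw [Aux.cumsum_succ]; simp only [ht0def]; omega
      have hval := h t0
      rw [Aux.muMinus_in_block s d p _ t0.val k hk h1 h2, if_pos rfl,
        if_pos (by simp only [ht0def]; omega)] at hval
      have hmu : muOf s d p t0.val = d k := Aux.muOf_in_block s d p t0.val k hk h1 h2
      have hd0 : 0 < d k := hdpos k hk
      constructor
      · intro t
        exact le_trans (h t) (Aux.muMinus_le_muOf s d p _ t.val)
      · intro hcontra
        have heq : lam t0 = muOf s d p t0.val := congrFun hcontra t0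
        omega
  refine ⟨parta, partb lam hlam, ?_⟩
  -- Part (c)
  intro F hF hFne
  have hfun : (fun i : Fin n => muMinus s d p (fun j => (fun _ : ℕ => 0) j + eF F j) i.val)
      = (fun i : Fin n => muMinus s d p (eF F) i.val) := by
    funext i
    congr 1
    funext j
    simp
  have hanti : Antitone (fun t : Fin n => muMinus s d p (eF F) t.val) := by
    intro t t' htt'
    exact Aux.muMinus_antitone s d p (eF F) hd hdpos htt'
  simp only [DeltaCx, Set.mem_setOf_eq]
  constructor
  · rintro ⟨j, hj⟩
    refine ⟨hF, ?_⟩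
    have hLle : ∀ t : Fin n, L j t ≤ muMinus s d p (eF F) t.val :=
      (partb (L j) (hL j) F hF hFne).mp hj
    rw [show (fun i : Fin n => muMinus s d p (fun u => 0 + eF F u) i.val)
        = fun i : Fin n => muMinus s d p (eF F) i.val from hfun]
    rw [Aux.mem_symIdeal_iff]
    exact ⟨j, 1, fun i => by simpa using hLle i⟩
  · rintro ⟨_, hmem⟩
    rw [show (fun i : Fin n => muMinus s d p (fun u => 0 + eF F u) i.val)
        = fun i : Fin n => muMinus s d p (eF F) i.val from hfun,
      Aux.mem_symIdeal_iff] at hmem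
    obtain ⟨j, σ, hσ⟩ := hmem
    have hdom := Aux.perm_dom (fun t : Fin n => muMinus s d p (eF F) t.val) (L j)
      hanti (hL j) σ hσ
    exact ⟨j, fun k hk t => (partb (L j) (hL j) F hF hFne).mpr hdom k hk t⟩
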